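/- Let V be a real subspace of ℂ^n with Kähler-angle decomposition V = V_1 ⊕ ⋯ ⊕ V_r, and let A be a complex-linear isometric automorphism of ℂ^n such that A(V) = V. Then A(V_i) = V_i for every i = 1, …, r, and A(ℂV_i ⊖ V_i) = ℂV_i ⊖ V_i for every i. -/

import Mathlib

noncomputable section

/-- `ℂ^n` as a Euclidean space. -/
abbrev En (n : ℕ) : Type := EuclideanSpace ℂ (Fin n)

/-- The complex structure `J`, multiplication by `i`. -/
def Jc {n : ℕ} (x : En n) : En n := Complex.I • x

/-- A real subspace `V` of `ℂ^n` has constant Kähler angle `φ` if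
`‖π_V (J v)‖² = cos²(φ) ‖v‖²` for all `v ∈ V`. -/
def HasConstKahlerAngle {n : ℕ} (V : Submodule ℝ (En n)) (φ : ℝ) : Prop :=
  ∀ v ∈ V, ‖(V.orthogonalProjection (Jc v) : En n)‖ ^ 2 = Real.cos φ ^ 2 * ‖v‖ ^ 2

/-- The complex span of a real subspace of `ℂ^n`, viewed as a real subspace. -/
def CSpan {n : ℕ} (V : Submodule ℝ (En n)) : Submodule ℝ (En n) :=
  (Submodule.span ℂ (V : Set (En n))).restrictScalars ℝ

namespace KA

variable {n : ℕ}

lemma rie (v w : En n) : (inner ℝ v w : ℝ) = Complex.re (inner ℂ v w : ℂ) := by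
  simp only [PiLp.inner_apply, Complex.re_sum]; rfl

/-- J as a real-linear map. -/
def Jl (n : ℕ) : En n →ₗ[ℝ] En n where
  toFun := Jc
  map_add' x y := by simp [Jc]
  map_smul' c x := by
    show Complex.I • (c • x) = c • (Complex.I • x)
    rw [smul_comm]

/-- T = π_V ∘ J as a real-linear map. -/
def Top {n : ℕ} (V : Submodule ℝ (En n)) : En n →ₗ[ℝ] En n :=
  (V.subtype ∘ₗ (V.orthogonalProjection).toLinearMap) ∘ₗ Jl n

lemma Top_apply (V : Submodule ℝ (En n)) (x : En n) :
    Top V x = (V.orthogonalProjection (Jc x) : En n) := rfl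

lemma Top_mem (V : Submodule ℝ (En n)) (x : En n) : Top V x ∈ V := by
  rw [Top_apply]; exact (V.orthogonalProjection (Jc x)).2

lemma inner_J_left (v w : En n) : (inner ℝ (Jc v) w : ℝ) = -(inner ℝ v (Jc w) : ℝ) := by
  simp [rie, Jc, inner_smul_left, inner_smul_right, Complex.mul_re, Complex.conj_I]

/-- real inner of projection with member of V. -/
lemma inner_proj_left (V : Submodule ℝ (En n)) (u w : En n) (hw : w ∈ V) :
    (inner ℝ ((V.orthogonalProjection u : En n)) w : ℝ) = (inner ℝ u w : ℝ) :=
  Submodule.inner_orthogonalProjection_eq_of_mem_right (𝕜 := ℝ) (K := V) ⟨w, hw⟩ u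

lemma inner_proj_right (V : Submodule ℝ (En n)) (u w : En n) (hw : w ∈ V) :
    (inner ℝ w ((V.orthogonalProjection u : En n)) : ℝ) = (inner ℝ w u : ℝ) :=
  Submodule.inner_orthogonalProjection_eq_of_mem_left (𝕜 := ℝ) (K := V) ⟨w, hw⟩ u

variable {r : ℕ} {Vs : Fin r → Submodule ℝ (En n)}

/-- An element of V orthogonal to all V_j, j ≠ i, lies in V_i. -/
lemma mem_component {V : Submodule ℝ (En n)} (hsum : V = ⨆ i, Vs i)
    (horth : ∀ i j, i ≠ j → ∀ v ∈ Vs i, ∀ w ∈ Vs j, (inner ℝ v w : ℝ) = 0)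
    (i : Fin r) (x : En n) (hx : x ∈ V)
    (h : ∀ j, j ≠ i → ∀ w ∈ Vs j, (inner ℝ x w : ℝ) = 0) : x ∈ Vs i := by
  rw [hsum, Submodule.mem_iSup_iff_exists_finsupp] at hx
  obtain ⟨f, hf, hfs⟩ := hx
  have hzero : ∀ j, j ≠ i → f j = 0 := by
    intro j hj
    have h1 : (inner ℝ x (f j) : ℝ) = 0 := h j hj (f j) (hf j)
    have h2 : (inner ℝ x (f j) : ℝ) = inner ℝ (f j) (f j) := by
      rw [← hfs, Finsupp.sum, sum_inner]
      by_cases hjs : j ∈ f.support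
      · rw [Finset.sum_eq_single j
          (fun k _ hkj => horth k j hkj (f k) (hf k) (f j) (hf j))
          (fun hjn => absurd hjs hjn)]
      · rw [Finsupp.notMem_support_iff.mp hjs]
        simp
    rw [h1] at h2
    exact (inner_self_eq_zero (𝕜 := ℝ)).mp h2.symm
  rw [← hfs, Finsupp.sum]
  refine Submodule.sum_mem _ fun j _ => ?_
  rcases eq_or_ne j i with rfl | hji
  · exact hf j
  · rw [hzero j hji]; exact (Vs i).zero_mem

/-- T maps each V_i into itself. -/
lemma Top_maps {V : Submodule ℝ (En n)} (hsum : V = ⨆ i, Vs i)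
    (horth : ∀ i j, i ≠ j → ∀ v ∈ Vs i, ∀ w ∈ Vs j, (inner ℝ v w : ℝ) = 0)
    (hherm : ∀ i j, i ≠ j → ∀ v ∈ Vs i, ∀ w ∈ Vs j, (inner ℂ v w : ℂ) = 0)
    (i : Fin r) (v : En n) (hv : v ∈ Vs i) : Top V v ∈ Vs i := by
  have hVle : ∀ j, Vs j ≤ V := fun j => hsum ▸ le_iSup Vs j
  refine mem_component hsum horth i _ (Top_mem V v) ?_
  intro j hj w hw
  rw [Top_apply, inner_proj_left V _ w (hVle j hw), rie, Jc, inner_smul_left]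
  rw [hherm i j (fun hij => hj hij.symm) v hv w hw]
  simp


/-- Polarization of the Kähler angle condition. -/
lemma Top_inner {V : Submodule ℝ (En n)} {i : Fin r} {φ : ℝ}
    (hangle : HasConstKahlerAngle (Vs i) φ)
    (hVi : ∀ x ∈ Vs i, Top V x = ((Vs i).orthogonalProjection (Jc x) : En n))
    (v w : En n) (hv : v ∈ Vs i) (hw : w ∈ Vs i) :
    (inner ℝ (Top V v) (Top V w) : ℝ) = Real.cos φ ^ 2 * (inner ℝ v w : ℝ) := by
  have key : ∀ x ∈ Vs i, ‖Top V x‖ ^ 2 = Real.cos φ ^ 2 * ‖x‖ ^ 2 := by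
    intro x hx; rw [hVi x hx]; exact hangle x hx
  have h1 := key v hv
  have h2 := key w hw
  have h3 := key (v + w) ((Vs i).add_mem hv hw)
  rw [map_add] at h3
  have e1 := real_inner_eq_norm_add_mul_self_sub_norm_mul_self_sub_norm_mul_self_div_two
    (Top V v) (Top V w)
  have e2 := real_inner_eq_norm_add_mul_self_sub_norm_mul_self_sub_norm_mul_self_div_two v w
  rw [e1, e2]
  nlinarith [h1, h2, h3]

/-- Each v ∈ V_i is an eigenvector of T². -/
lemma Top_sq_eq {V : Submodule ℝ (En n)} (hsum : V = ⨆ i, Vs i)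
    (horth : ∀ i j, i ≠ j → ∀ v ∈ Vs i, ∀ w ∈ Vs j, (inner ℝ v w : ℝ) = 0)
    (hherm : ∀ i j, i ≠ j → ∀ v ∈ Vs i, ∀ w ∈ Vs j, (inner ℂ v w : ℂ) = 0)
    {i : Fin r} {φ : ℝ} (hangle : HasConstKahlerAngle (Vs i) φ)
    (hVi : ∀ x ∈ Vs i, Top V x = ((Vs i).orthogonalProjection (Jc x) : En n))
    (v : En n) (hv : v ∈ Vs i) :
    Top V (Top V v) = -(Real.cos φ ^ 2) • v := by
  have hVle : ∀ j, Vs j ≤ V := fun j => hsum ▸ le_iSup Vs j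
  have hTv : Top V v ∈ Vs i := Top_maps hsum horth hherm i v hv
  have hTTv : Top V (Top V v) ∈ Vs i := Top_maps hsum horth hherm i _ hTv
  set d : En n := Top V (Top V v) + (Real.cos φ ^ 2) • v with hd
  have hdmem : d ∈ Vs i := (Vs i).add_mem hTTv ((Vs i).smul_mem _ hv)
  have hinner : ∀ w ∈ Vs i, (inner ℝ d w : ℝ) = 0 := by
    intro w hw
    have hw' : w ∈ V := hVle i hw
    have e1 : (inner ℝ (Top V (Top V v)) w : ℝ) = -(inner ℝ (Top V v) (Top V w) : ℝ) := by
      rw [Top_apply V (Top V v), inner_proj_left V _ w hw', inner_J_left]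
      congr 1
      rw [Top_apply V w, inner_proj_right V (Jc w) (Top V v) (hVle i hTv)]
    have e2 := Top_inner hangle hVi v w hv hw
    rw [hd, inner_add_left, e1, e2, real_inner_smul_left]
    ring
  have : (inner ℝ d d : ℝ) = 0 := hinner d hdmem
  have hd0 : d = 0 := (inner_self_eq_zero (𝕜 := ℝ)).mp this
  have : Top V (Top V v) = -((Real.cos φ ^ 2) • v) := by
    rw [eq_neg_iff_add_eq_zero]; exact hd0
  rw [this, neg_smul]

/-- The condition `T x = π_{V_i}(J x)` for `x ∈ V_i`. -/
lemma Top_eq_proj {V : Submodule ℝ (En n)} (hsum : V = ⨆ i, Vs i)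
    (horth : ∀ i j, i ≠ j → ∀ v ∈ Vs i, ∀ w ∈ Vs j, (inner ℝ v w : ℝ) = 0)
    (hherm : ∀ i j, i ≠ j → ∀ v ∈ Vs i, ∀ w ∈ Vs j, (inner ℂ v w : ℂ) = 0)
    (i : Fin r) (x : En n) (hx : x ∈ Vs i) :
    Top V x = ((Vs i).orthogonalProjection (Jc x) : En n) := by
  have hVle : ∀ j, Vs j ≤ V := fun j => hsum ▸ le_iSup Vs j
  have hTx : Top V x ∈ Vs i := Top_maps hsum horth hherm i x hx
  refine (Submodule.eq_starProjection_of_mem_of_inner_eq_zero hTx ?_).symm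
  intro w hw
  rw [Top_apply]
  exact Submodule.starProjection_inner_eq_zero (Jc x) w (hVle i hw)


lemma cos_sq_inj {r : ℕ} {φ : Fin r → ℝ} (hφ : ∀ i, 0 ≤ φ i ∧ φ i ≤ Real.pi / 2)
    (hφmono : StrictMono φ) {i j : Fin r}
    (h : Real.cos (φ i) ^ 2 = Real.cos (φ j) ^ 2) : i = j := by
  have habs : ∀ k, φ k ∈ Set.Icc 0 Real.pi := fun k =>
    ⟨(hφ k).1, le_trans (hφ k).2 (by linarith [Real.pi_pos])⟩
  have hnonneg : ∀ k, 0 ≤ Real.cos (φ k) := fun k =>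
    Real.cos_nonneg_of_mem_Icc ⟨by linarith [Real.pi_pos, (hφ k).1], (hφ k).2⟩
  by_contra hij
  rcases lt_or_gt_of_ne hij with hlt | hlt
  · have := Real.strictAntiOn_cos (habs i) (habs j) (hφmono hlt)
    have := pow_lt_pow_left₀ this (hnonneg j) (by norm_num : (2:ℕ) ≠ 0)
    rw [h] at this; exact lt_irrefl _ this
  · have := Real.strictAntiOn_cos (habs j) (habs i) (hφmono hlt)
    have := pow_lt_pow_left₀ this (hnonneg i) (by norm_num : (2:ℕ) ≠ 0)
    rw [h] at this; exact lt_irrefl _ this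

/-- Eigenvectors of T² in V with eigenvalue -cos²(φ i) lie in V_i. -/
lemma eig_mem {V : Submodule ℝ (En n)} (hsum : V = ⨆ i, Vs i)
    (horth : ∀ i j, i ≠ j → ∀ v ∈ Vs i, ∀ w ∈ Vs j, (inner ℝ v w : ℝ) = 0)
    (hherm : ∀ i j, i ≠ j → ∀ v ∈ Vs i, ∀ w ∈ Vs j, (inner ℂ v w : ℂ) = 0)
    {φ : Fin r → ℝ} (hφ : ∀ i, 0 ≤ φ i ∧ φ i ≤ Real.pi / 2) (hφmono : StrictMono φ)
    (hangle : ∀ i, HasConstKahlerAngle (Vs i) (φ i))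
    (i : Fin r) (x : En n) (hx : x ∈ V)
    (heq : Top V (Top V x) = -(Real.cos (φ i) ^ 2) • x) : x ∈ Vs i := by
  rw [hsum, Submodule.mem_iSup_iff_exists_finsupp] at hx
  obtain ⟨f, hf, hfs⟩ := hx
  set c : Fin r → ℝ := fun j => Real.cos (φ j) ^ 2 with hc
  have heigj : ∀ j, Top V (Top V (f j)) = -(c j) • f j := fun j =>
    Top_sq_eq hsum horth hherm (hangle j) (Top_eq_proj hsum horth hherm j) (f j) (hf j)
  have hsum2 : ∑ j ∈ f.support, ((c i) - (c j)) • f j = 0 := by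
    have h1 : Top V (Top V x) = ∑ j ∈ f.support, -(c j) • f j := by
      conv_lhs => rw [← hfs]
      rw [Finsupp.sum, map_sum, map_sum]
      exact Finset.sum_congr rfl fun j _ => heigj j
    have h2 : Top V (Top V x) = ∑ j ∈ f.support, -(c i) • f j := by
      rw [heq]
      conv_lhs => rw [← hfs]
      rw [Finsupp.sum, Finset.smul_sum]
    have h3 : (0 : En n) = ∑ j ∈ f.support, (-(c j) • f j - -(c i) • f j) := by
      rw [Finset.sum_sub_distrib, ← h1, ← h2, sub_self]
    rw [h3]
    exact Finset.sum_congr rfl fun j _ => by module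
  have hzero : ∀ k, k ≠ i → f k = 0 := by
    intro k hk
    by_cases hks : k ∈ f.support
    · have h0 : (inner ℝ (∑ j ∈ f.support, ((c i) - (c j)) • f j) (f k) : ℝ) = 0 := by
        rw [hsum2, inner_zero_left]
      rw [sum_inner] at h0
      rw [Finset.sum_eq_single k (fun j _ hjk => by
            rw [real_inner_smul_left, horth j k hjk (f j) (hf j) (f k) (hf k), mul_zero])
          (fun h => absurd hks h)] at h0
      rw [real_inner_smul_left] at h0
      rcases mul_eq_zero.mp h0 with h' | h'
      · exact absurd (cos_sq_inj hφ hφmono (sub_eq_zero.mp h')) (fun h => hk h.symm)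
      · exact (inner_self_eq_zero (𝕜 := ℝ)).mp h'
    · exact Finsupp.notMem_support_iff.mp hks
  rw [← hfs, Finsupp.sum]
  refine Submodule.sum_mem _ fun j _ => ?_
  rcases eq_or_ne j i with rfl | hji
  · exact hf j
  · rw [hzero j hji]; exact (Vs i).zero_mem


lemma inner_A (A : En n ≃ₗᵢ[ℂ] En n) (x y : En n) :
    (inner ℝ (A x) (A y) : ℝ) = (inner ℝ x y : ℝ) := by
  rw [rie, rie, A.inner_map_map]

lemma proj_comm {V : Submodule ℝ (En n)} (A : En n ≃ₗᵢ[ℂ] En n)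
    (hA : ⇑A '' (V : Set (En n)) = (V : Set (En n))) (y : En n) :
    (V.orthogonalProjection (A y) : En n) = A (V.orthogonalProjection y) := by
  have hmem : A ((V.orthogonalProjection y : En n)) ∈ V := by
    rw [← SetLike.mem_coe, ← hA]
    exact ⟨_, (V.orthogonalProjection y).2, rfl⟩
  refine Submodule.eq_starProjection_of_mem_of_inner_eq_zero hmem ?_
  intro w hw
  rw [← SetLike.mem_coe, ← hA] at hw
  obtain ⟨w', hw', rfl⟩ := hw
  rw [← map_sub, inner_A]
  exact Submodule.starProjection_inner_eq_zero y w' hw'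

lemma Top_comm {V : Submodule ℝ (En n)} (A : En n ≃ₗᵢ[ℂ] En n)
    (hA : ⇑A '' (V : Set (En n)) = (V : Set (En n))) (x : En n) :
    Top V (A x) = A (Top V x) := by
  have hJ : Jc (A x) = A (Jc x) := by
    rw [Jc, Jc, map_smul]
  rw [Top_apply, Top_apply, hJ, proj_comm A hA]

end KA

/-- A unitary transformation of `ℂ^n` preserving a real subspace `V` preserves
each factor `V_i` of its Kähler-angle decomposition, as well as each
`ℂV_i ⊖ V_i`. -/
theorem unitary_preserves_kahler_factors (n : ℕ)
    (V : Submodule ℝ (En n)) (r : ℕ)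
    (Vs : Fin r → Submodule ℝ (En n)) (φ : Fin r → ℝ)
    (hφ : ∀ i, 0 ≤ φ i ∧ φ i ≤ Real.pi / 2)
    (hφmono : StrictMono φ)
    (hne : ∀ i, Vs i ≠ ⊥)
    (hsum : V = ⨆ i, Vs i)
    (horth : ∀ i j, i ≠ j → ∀ v ∈ Vs i, ∀ w ∈ Vs j, (inner ℝ v w : ℝ) = 0)
    (hangle : ∀ i, HasConstKahlerAngle (Vs i) (φ i))
    (hherm : ∀ i j, i ≠ j → ∀ v ∈ Vs i, ∀ w ∈ Vs j, (inner ℂ v w : ℂ) = 0)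
    (A : En n ≃ₗᵢ[ℂ] En n)
    (hA : ⇑A '' (V : Set (En n)) = (V : Set (En n))) :
    (∀ i, ⇑A '' (Vs i : Set (En n)) = (Vs i : Set (En n))) ∧
    (∀ i, ⇑A '' ((CSpan (Vs i) ⊓ (Vs i)ᗮ : Submodule ℝ (En n)) : Set (En n))
        = ((CSpan (Vs i) ⊓ (Vs i)ᗮ : Submodule ℝ (En n)) : Set (En n))) := by
  classical
  have hVle : ∀ j, Vs j ≤ V := fun j => hsum ▸ le_iSup Vs j
  have hAsymmV : ⇑A.symm '' (V : Set (En n)) = (V : Set (En n)) := by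
    conv_lhs => rw [← hA, ← Set.image_comp]
    simp
  -- forward invariance for any unitary preserving V
  have key : ∀ (B : En n ≃ₗᵢ[ℂ] En n), ⇑B '' (V : Set (En n)) = V →
      ∀ i, ∀ v ∈ Vs i, B v ∈ Vs i := by
    intro B hB i v hv
    have hBv : B v ∈ V := by
      rw [← SetLike.mem_coe, ← hB]
      exact ⟨v, hVle i hv, rfl⟩
    refine KA.eig_mem hsum horth hherm hφ hφmono hangle i _ hBv ?_
    have h1 : KA.Top V (KA.Top V v) = -(Real.cos (φ i) ^ 2) • v :=
      KA.Top_sq_eq hsum horth hherm (hangle i) (KA.Top_eq_proj hsum horth hherm i) v hv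
    have hBsmul : ∀ (t : ℝ) (u : En n), B (t • u) = t • B u := fun t u => by
      rw [← algebraMap_smul ℂ t u, ← algebraMap_smul ℂ t (B u), map_smul]
    rw [KA.Top_comm B hB, KA.Top_comm B hB, h1, hBsmul]
  have h1 : ∀ i, ⇑A '' (Vs i : Set (En n)) = (Vs i : Set (En n)) := by
    intro i
    apply Set.Subset.antisymm
    · rintro _ ⟨v, hv, rfl⟩
      exact key A hA i v hv
    · intro w hw
      exact ⟨A.symm w, key A.symm hAsymmV i w hw, A.apply_symm_apply w⟩
  refine ⟨h1, fun i => ?_⟩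
  -- complex span is preserved
  have hspan : ⇑A '' ((CSpan (Vs i) : Submodule ℝ (En n)) : Set (En n))
      = ((CSpan (Vs i) : Submodule ℝ (En n)) : Set (En n)) := by
    have hmap : Submodule.map (A.toLinearEquiv : En n →ₗ[ℂ] En n)
        (Submodule.span ℂ ((Vs i : Set (En n)))) = Submodule.span ℂ ((Vs i : Set (En n))) := by
      rw [Submodule.map_span]
      rw [show ⇑(A.toLinearEquiv : En n →ₗ[ℂ] En n) '' ((Vs i : Set (En n)))
        = ⇑A '' ((Vs i : Set (En n))) from rfl, h1 i]
    have hcoe : ((CSpan (Vs i) : Submodule ℝ (En n)) : Set (En n))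
        = ((Submodule.span ℂ ((Vs i : Set (En n)))) : Set (En n)) := rfl
    rw [hcoe]
    conv_rhs => rw [← hmap, Submodule.map_coe]
    congr 1
  -- orthogonal complement is preserved
  have hperp_fwd : ∀ (B : En n ≃ₗᵢ[ℂ] En n), (⇑B '' (Vs i : Set (En n)) = Vs i) →
      ∀ y ∈ (Vs i)ᗮ, B y ∈ (Vs i)ᗮ := by
    intro B hB y hy
    rw [Submodule.mem_orthogonal]
    intro u hu
    rw [← SetLike.mem_coe, ← hB] at hu
    obtain ⟨u', hu', rfl⟩ := hu
    rw [KA.inner_A]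
    exact (Submodule.mem_orthogonal _ _).mp hy u' hu'
  have hAsymmVs : ⇑A.symm '' (Vs i : Set (En n)) = (Vs i : Set (En n)) := by
    conv_lhs => rw [← h1 i, ← Set.image_comp]
    simp
  have hperp : ⇑A '' (((Vs i)ᗮ : Submodule ℝ (En n)) : Set (En n))
      = (((Vs i)ᗮ : Submodule ℝ (En n)) : Set (En n)) := by
    apply Set.Subset.antisymm
    · rintro _ ⟨y, hy, rfl⟩
      exact hperp_fwd A (h1 i) y hy
    · intro w hw
      exact ⟨A.symm w, hperp_fwd A.symm hAsymmVs w hw, A.apply_symm_apply w⟩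
  have hinf : ((CSpan (Vs i) ⊓ (Vs i)ᗮ : Submodule ℝ (En n)) : Set (En n))
      = ((CSpan (Vs i) : Submodule ℝ (En n)) : Set (En n)) ∩
        (((Vs i)ᗮ : Submodule ℝ (En n)) : Set (En n)) := rfl
  rw [hinf, Set.image_inter A.injective, hspan, hperp]
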